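/- Let Q be a finite connected quandle whose underlying set is {1,2,…,n} and whose elements are naturally ordered. Let μ be a natural reordering with respect to r_q for some q ∈ Q, and let ν be a natural reordering with respect to r_n. Then the composition ν ∘ μ is a natural reordering with respect to r_q. -/

import Mathlib

/-- A quandle structure on a set `Q`: a binary operation `op` that is idempotent,
right-invertible (each right translation `r_b : x ↦ x * b` is a bijection) and
right-distributive. -/
structure QuandleOp (Q : Type*) where
  op : Q → Q → Q
  op_self : ∀ a, op a a = a
  op_bijective : ∀ b, Function.Bijective fun a => op a b
  op_distrib : ∀ a b c, op (op a b) c = op (op a c) (op b c)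

namespace QuandleOp

/-- The right translation `r_b : x ↦ x * b`, as a permutation of `Q`. -/
noncomputable def r {Q : Type*} (S : QuandleOp Q) (b : Q) : Equiv.Perm Q :=
  Equiv.ofBijective _ (S.op_bijective b)

/-- A quandle is connected if every element can be taken to every other element by a
finite composition of the maps `r_b` and their inverses, i.e. by an element of the
subgroup of permutations generated by the `r_b`. -/
def Connected {Q : Type*} (S : QuandleOp Q) : Prop :=
  ∀ a b : Q, ∃ g ∈ Subgroup.closure (Set.range S.r), g a = b

end QuandleOp

/-- The element `n` of the quandle `{1, …, n}` modelled as `Fin n` (element `m`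
corresponds to the index `m - 1`). -/
def theTop (n : ℕ) [NeZero n] : Fin n :=
  ⟨n - 1, Nat.sub_lt (Nat.pos_of_ne_zero (NeZero.ne n)) Nat.one_pos⟩

/-- `ν` is a natural reordering with respect to `r q`, realized by the presentation of
`r q` as the product of the disjoint cycles `(I s 0  I s 1 … I s (ℓ s - 1))` for
`s = 0, …, k-1` together with the fixed point `(q)`, where `1 ≤ ℓ 0 ≤ ⋯ ≤ ℓ (k-1)`:
it sends `q` to the top element `n` (index `n - 1`) and sends the `t`-th entry of the
`s`-th cycle to the element with index `(ℓ 0 + ⋯ + ℓ (s-1)) + t`. -/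
def IsNaturalReorderingWith {n : ℕ} (S : QuandleOp (Fin n)) (q : Fin n)
    (ν : Equiv.Perm (Fin n)) {k : ℕ} (ℓ : Fin k → ℕ)
    (I : (s : Fin k) → Fin (ℓ s) → Fin n) : Prop :=
  (ν q).val = n - 1 ∧
  (∀ s, 1 ≤ ℓ s) ∧
  Monotone ℓ ∧
  (∑ s, ℓ s) = n - 1 ∧
  Function.Injective (fun p : (s : Fin k) × Fin (ℓ s) => I p.1 p.2) ∧
  (∀ (s : Fin k) (t : Fin (ℓ s)), I s t ≠ q) ∧
  (∀ (s : Fin k) (t : Fin (ℓ s)),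
    S.op (I s t) q = I s ⟨(t.val + 1) % ℓ s, Nat.mod_lt _ (Nat.zero_lt_of_lt t.isLt)⟩) ∧
  (∀ (s : Fin k) (t : Fin (ℓ s)),
    (ν (I s t)).val = (∑ j ∈ Finset.Iio s, ℓ j) + t.val)

/-- `ν` is a natural reordering with respect to `r q` (for some presentation of `r q`
as a product of disjoint cycles of weakly increasing lengths, together with `(q)`). -/
def IsNaturalReordering {n : ℕ} (S : QuandleOp (Fin n)) (q : Fin n)
    (ν : Equiv.Perm (Fin n)) : Prop :=
  ∃ (k : ℕ) (ℓ : Fin k → ℕ) (I : (s : Fin k) → Fin (ℓ s) → Fin n),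
    IsNaturalReorderingWith S q ν ℓ I

/-- The elements of the quandle are naturally ordered with cycle lengths `ℓ`:
`r n` is decomposed into disjoint cycles in form (N), i.e. the identity reordering is a
natural reordering with respect to `r n` with cycle lengths `ℓ`.  (This also says that
the profile of the quandle is `{1, ℓ 0, …, ℓ (k-1)}`.) -/
def NaturallyOrderedWith {n : ℕ} [NeZero n] (S : QuandleOp (Fin n)) {k : ℕ}
    (ℓ : Fin k → ℕ) : Prop :=
  ∃ I, IsNaturalReorderingWith S (theTop n) (Equiv.refl (Fin n)) ℓ I

/-- The elements of the quandle are naturally ordered (the quandle matrix is in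
canonical form). -/
def NaturallyOrdered {n : ℕ} [NeZero n] (S : QuandleOp (Fin n)) : Prop :=
  ∃ (k : ℕ) (ℓ : Fin k → ℕ), NaturallyOrderedWith S ℓ

/-- The quandle operation (equivalently, the quandle matrix) obtained after reordering
the elements by the bijection `ν`: the new matrix has entry `ν (i * j)` in row `ν i`
and column `ν j`. -/
def reorderedOp {n : ℕ} (S : QuandleOp (Fin n)) (ν : Equiv.Perm (Fin n)) :
    Fin n → Fin n → Fin n :=
  fun i j => ν (S.op (ν.symm i) (ν.symm j))

/- ### Auxiliary lemmas -/

section Aux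

lemma sorted_eq {k₁ k₂ : ℕ} {ℓ₁ : Fin k₁ → ℕ} {ℓ₂ : Fin k₂ → ℕ}
    (h₁ : Monotone ℓ₁) (h₂ : Monotone ℓ₂) (σ : Fin k₁ → Fin k₂)
    (hσ : Function.Bijective σ) (hc : ∀ a, ℓ₁ a = ℓ₂ (σ a)) :
    ∃ e : k₁ = k₂, ∀ i, ℓ₁ i = ℓ₂ (Fin.cast e i) := by
  have e : k₁ = k₂ := by simpa using (Fintype.card_of_bijective hσ)
  subst e
  refine ⟨rfl, ?_⟩
  have hfun : ℓ₁ = ℓ₂ ∘ ⇑(Equiv.ofBijective σ hσ) := funext fun a => hc a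
  have hperm : (List.ofFn ℓ₁).Perm (List.ofFn ℓ₂) := by
    rw [hfun]
    exact Equiv.Perm.ofFn_comp_perm (Equiv.ofBijective σ hσ) ℓ₂
  have := List.Perm.eq_of_sortedLE
    (List.sortedLE_ofFn_iff.2 h₁) (List.sortedLE_ofFn_iff.2 h₂) hperm
  have := List.ofFn_injective this
  intro i
  simp [this]

lemma I_congr {n k : ℕ} {ℓ : Fin k → ℕ} (I : (s : Fin k) → Fin (ℓ s) → Fin n)
    {s s' : Fin k} {t : Fin (ℓ s)} {t' : Fin (ℓ s')}
    (hs : s = s') (ht : (t : ℕ) = (t' : ℕ)) : I s t = I s' t' := by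
  subst hs
  congr 1
  exact Fin.ext ht

lemma sigma_fin_ext {k : ℕ} {ℓ : Fin k → ℕ} {p p' : Σ s : Fin k, Fin (ℓ s)}
    (h1 : p.1 = p'.1) (h2 : (p.2 : ℕ) = (p'.2 : ℕ)) : p = p' := by
  obtain ⟨a, b⟩ := p
  obtain ⟨a', b'⟩ := p'
  dsimp at h1
  subst h1
  dsimp at h2
  rw [Fin.ext h2]

lemma sigma_fin_mk_eq {k : ℕ} {ℓ : Fin k → ℕ} {a a' : Fin k} {b : Fin (ℓ a)}
    {b' : Fin (ℓ a')} (h : (⟨a, b⟩ : Σ s : Fin k, Fin (ℓ s)) = ⟨a', b'⟩) :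
    a = a' ∧ (b : ℕ) = (b' : ℕ) := by
  obtain ⟨ha, hb⟩ := Sigma.mk.inj_iff.1 h
  subst ha
  exact ⟨rfl, congrArg Fin.val (eq_of_heq hb)⟩

lemma sum_Iio_cast {k₁ k₂ : ℕ} (e : k₁ = k₂) (f : Fin k₂ → ℕ) (s : Fin k₁) :
    ∑ j ∈ Finset.Iio s, f (Fin.cast e j) = ∑ j ∈ Finset.Iio (Fin.cast e s), f j := by
  subst e
  simp

namespace QuandleOp

variable {n : ℕ} {S : QuandleOp (Fin n)}

lemma r_apply (b x : Fin n) : S.r b x = S.op x b := rfl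

/-- A presentation of `r q` as a product of disjoint cycles together with `(q)`,
without the reordering data. -/
def IsCycleDecomp (S : QuandleOp (Fin n)) (q : Fin n) {k : ℕ} (ℓ : Fin k → ℕ)
    (I : (s : Fin k) → Fin (ℓ s) → Fin n) : Prop :=
  (∀ s, 1 ≤ ℓ s) ∧ (∑ s, ℓ s) = n - 1 ∧
  Function.Injective (fun p : (s : Fin k) × Fin (ℓ s) => I p.1 p.2) ∧
  (∀ s t, I s t ≠ q) ∧
  (∀ (s : Fin k) (t : Fin (ℓ s)),
    S.op (I s t) q = I s ⟨(t.val + 1) % ℓ s, Nat.mod_lt _ (Nat.zero_lt_of_lt t.isLt)⟩)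

variable {q : Fin n} {k : ℕ} {ℓ : Fin k → ℕ} {I : (s : Fin k) → Fin (ℓ s) → Fin n}

lemma IsCycleDecomp.iter (h : IsCycleDecomp S q ℓ I) (s : Fin k) :
    ∀ (m : ℕ) (t : Fin (ℓ s)), (fun x => S.op x q)^[m] (I s t) =
      I s ⟨(t.val + m) % ℓ s, Nat.mod_lt _ (Nat.zero_lt_of_lt t.isLt)⟩ := by
  intro m
  induction m with
  | zero => intro t; simp [Nat.mod_eq_of_lt t.isLt]
  | succ m ih =>
    intro t
    rw [Function.iterate_succ_apply', ih t, h.2.2.2.2 s _]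
    exact I_congr I rfl (by simp [Nat.mod_add_mod, Nat.add_assoc])

lemma IsCycleDecomp.len_dvd {k₂ : ℕ} {ℓ₂ : Fin k₂ → ℕ}
    {I₂ : (s : Fin k₂) → Fin (ℓ₂ s) → Fin n}
    (h₁ : IsCycleDecomp S q ℓ I) (h₂ : IsCycleDecomp S q ℓ₂ I₂)
    {a : Fin k} {b : Fin k₂} {t₁ : Fin (ℓ a)} {t₂ : Fin (ℓ₂ b)}
    (heq : I a t₁ = I₂ b t₂) : ℓ a ∣ ℓ₂ b := by
  have h1 := h₁.iter a (ℓ₂ b) t₁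
  have h2 := h₂.iter b (ℓ₂ b) t₂
  have e2 : I₂ b ⟨(t₂.val + ℓ₂ b) % ℓ₂ b, Nat.mod_lt _ (Nat.zero_lt_of_lt t₂.isLt)⟩
      = I₂ b t₂ := I_congr I₂ rfl (by simp [Nat.mod_eq_of_lt t₂.isLt])
  have e1 : I a t₁ = I a ⟨(t₁.val + ℓ₂ b) % ℓ a,
      Nat.mod_lt _ (Nat.zero_lt_of_lt t₁.isLt)⟩ := by
    rw [← h1, heq, h2]
    exact e2.symm
  have h4 := h₁.2.2.1 (a₁ := ⟨a, t₁⟩)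
    (a₂ := ⟨a, ⟨(t₁.val + ℓ₂ b) % ℓ a, Nat.mod_lt _ (Nat.zero_lt_of_lt t₁.isLt)⟩⟩) e1
  have h5 := (sigma_fin_mk_eq h4).2
  have : t₁.val ≡ t₁.val + ℓ₂ b [MOD ℓ a] := by
    unfold Nat.ModEq
    rw [Nat.mod_eq_of_lt t₁.isLt]
    exact h5
  simpa using (Nat.modEq_iff_dvd' (Nat.le_add_right _ _)).1 this

lemma IsCycleDecomp.surj [NeZero n] (h : IsCycleDecomp S q ℓ I) {x : Fin n}
    (hx : x ≠ q) : ∃ s t, I s t = x := by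
  have card1 : Fintype.card ((s : Fin k) × Fin (ℓ s)) = n - 1 := by
    simpa using h.2.1
  have card2 : Fintype.card {y : Fin n // y ≠ q} = n - 1 := by
    simp [Fintype.card_subtype_compl]
  have hbij : Function.Bijective (fun p : (s : Fin k) × Fin (ℓ s) =>
      (⟨I p.1 p.2, h.2.2.2.1 _ _⟩ : {y : Fin n // y ≠ q})) := by
    rw [Fintype.bijective_iff_injective_and_card]
    exact ⟨fun p p' hpp => h.2.2.1 (congrArg Subtype.val hpp), by rw [card1, card2]⟩
  obtain ⟨p, hp⟩ := hbij.2 ⟨x, hx⟩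
  exact ⟨p.1, p.2, congrArg Subtype.val hp⟩

lemma conj_r {g : Equiv.Perm (Fin n)} (hg : g ∈ Subgroup.closure (Set.range S.r)) :
    ∀ b, g * S.r b = S.r (g b) * g := by
  induction hg using Subgroup.closure_induction with
  | mem x hx =>
    obtain ⟨c, rfl⟩ := hx
    intro b
    exact Equiv.ext fun y => S.op_distrib y b c
  | one => intro b; simp
  | mul x y hx hy ihx ihy =>
    intro b
    calc x * y * S.r b = x * (S.r (y b)) * y := by rw [mul_assoc, ihy b, mul_assoc]
    _ = S.r (x (y b)) * x * y := by rw [ihx (y b)]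
    _ = S.r ((x * y) b) * (x * y) := by rw [Equiv.Perm.mul_apply, mul_assoc]
  | inv x hx ihx =>
    intro b
    have h := ihx (x⁻¹ b)
    rw [show x (x⁻¹ b) = b from x.apply_symm_apply b] at h
    calc x⁻¹ * S.r b = x⁻¹ * (S.r b * x) * x⁻¹ := by group
    _ = x⁻¹ * (x * S.r (x⁻¹ b)) * x⁻¹ := by rw [h]
    _ = S.r (x⁻¹ b) * x⁻¹ := by group

/-- Two cycle decompositions of the same `r q` agree up to a bijection of the cycle
indices and rotations of the cycles. -/
lemma IsCycleDecomp.correspond [NeZero n] {k₂ : ℕ} {ℓ₂ : Fin k₂ → ℕ}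
    {I₂ : (s : Fin k₂) → Fin (ℓ₂ s) → Fin n}
    (h₁ : IsCycleDecomp S q ℓ I) (h₂ : IsCycleDecomp S q ℓ₂ I₂) :
    ∃ (σ : Fin k → Fin k₂) (c : (a : Fin k) → Fin (ℓ₂ (σ a))),
      Function.Bijective σ ∧ (∀ a, ℓ a = ℓ₂ (σ a)) ∧
      ∀ (a : Fin k) (t : Fin (ℓ a)), I a t =
        I₂ (σ a) ⟨((c a).val + t.val) % ℓ₂ (σ a),
          Nat.mod_lt _ (Nat.zero_lt_of_lt (c a).isLt)⟩ := by
  have hzero : ∀ a : Fin k, (0 : ℕ) < ℓ a := fun a => h₁.1 a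
  have hex : ∀ a : Fin k, ∃ p : (s : Fin k₂) × Fin (ℓ₂ s),
      I₂ p.1 p.2 = I a ⟨0, hzero a⟩ := by
    intro a
    obtain ⟨s, t, hst⟩ := h₂.surj (h₁.2.2.2.1 a ⟨0, hzero a⟩)
    exact ⟨⟨s, t⟩, hst⟩
  choose p hp using hex
  have hlen : ∀ a, ℓ a = ℓ₂ ((p a).1) := fun a =>
    Nat.dvd_antisymm (h₁.len_dvd h₂ (hp a).symm) (h₂.len_dvd h₁ (hp a))
  have main : ∀ (a : Fin k) (m : ℕ) (hm : m < ℓ a), I a ⟨m, hm⟩ =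
      I₂ (p a).1 ⟨((p a).2.val + m) % ℓ₂ (p a).1,
        Nat.mod_lt _ (Nat.zero_lt_of_lt (p a).2.isLt)⟩ := by
    intro a m
    induction m with
    | zero =>
      intro hm
      rw [← hp a]
      exact I_congr I₂ rfl (by simp [Nat.mod_eq_of_lt (p a).2.isLt])
    | succ m ih =>
      intro hm
      have hm' : m < ℓ a := Nat.lt_of_succ_lt hm
      have step := h₁.2.2.2.2 a ⟨m, hm'⟩
      rw [ih hm', h₂.2.2.2.2] at step
      calc I a ⟨m + 1, hm⟩
          = I a ⟨(m + 1) % ℓ a, Nat.mod_lt _ (Nat.zero_lt_of_lt hm')⟩ :=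
            I_congr I rfl (by simp [Nat.mod_eq_of_lt hm])
        _ = I₂ (p a).1 ⟨((p a).2.val + (m + 1)) % ℓ₂ (p a).1,
              Nat.mod_lt _ (Nat.zero_lt_of_lt (p a).2.isLt)⟩ := by
            rw [← step]
            exact I_congr I₂ rfl (by simp [Nat.mod_add_mod, Nat.add_assoc])
  refine ⟨fun a => (p a).1, fun a => (p a).2, ⟨?_, ?_⟩, hlen,
    fun a t => main a t.val t.isLt⟩
  · -- injective
    intro a b hab
    simp only at hab
    have hca : ((p a).2 : ℕ) < ℓ₂ ((p a).1) := (p a).2.isLt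
    have hcb : ((p b).2 : ℕ) < ℓ₂ ((p a).1) := by rw [hab]; exact (p b).2.isLt
    have hm : (((p b).2 : ℕ) + ℓ₂ ((p a).1) - ((p a).2 : ℕ)) % ℓ₂ ((p a).1)
        < ℓ a := by
      rw [hlen a]; exact Nat.mod_lt _ (Nat.zero_lt_of_lt hca)
    have hval : (((p a).2 : ℕ) + ((((p b).2 : ℕ) + ℓ₂ ((p a).1) - ((p a).2 : ℕ))
        % ℓ₂ ((p a).1))) % ℓ₂ ((p a).1) = ((p b).2 : ℕ) := by
      rw [Nat.add_mod_mod, Nat.add_sub_cancel'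
        (le_trans (Nat.le_of_lt hca) (Nat.le_add_left _ _)),
        Nat.add_mod_right, Nat.mod_eq_of_lt hcb]
    have h1 := main a _ hm
    have h2 : I₂ (p a).1 ⟨(((p a).2 : ℕ) + ((((p b).2 : ℕ) + ℓ₂ ((p a).1)
        - ((p a).2 : ℕ)) % ℓ₂ ((p a).1))) % ℓ₂ ((p a).1),
        Nat.mod_lt _ (Nat.zero_lt_of_lt (p a).2.isLt)⟩ = I₂ (p b).1 (p b).2 :=
      I_congr I₂ hab (by simp [hval])
    have h3 : I a ⟨_, hm⟩ = I b ⟨0, hzero b⟩ := by rw [h1, h2, hp b]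
    exact (sigma_fin_mk_eq (h₁.2.2.1 (a₁ := ⟨a, ⟨_, hm⟩⟩)
      (a₂ := ⟨b, ⟨0, hzero b⟩⟩) h3)).1
  · -- surjective
    intro u
    obtain ⟨a, t, hat⟩ := h₁.surj (h₂.2.2.2.1 u ⟨0, h₂.1 u⟩)
    have h1 := main a t.val t.isLt
    rw [Fin.eta, hat] at h1
    have h6 : (⟨u, ⟨0, h₂.1 u⟩⟩ : Σ s : Fin k₂, Fin (ℓ₂ s)) =
        ⟨(p a).1, ⟨((p a).2.val + t.val) % ℓ₂ (p a).1,
          Nat.mod_lt _ (Nat.zero_lt_of_lt (p a).2.isLt)⟩⟩ := h₂.2.2.1 h1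
    exact ⟨a, ((sigma_fin_mk_eq h6).1).symm⟩

end QuandleOp
end Aux

/-- Lemma `composite` of the paper: let the elements of a finite
connected quandle on `{1,…,n}` be naturally ordered.  If `μ` is a natural reordering
with respect to `r q` and `ν` is a natural reordering with respect to `r n`, then the
composition `ν ∘ μ` is a natural reordering with respect to `r q`. -/
theorem natural_reordering_comp
    {n : ℕ} [NeZero n] (S : QuandleOp (Fin n)) (hconn : S.Connected)
    (hord : NaturallyOrdered S) (q : Fin n) (μ ν : Equiv.Perm (Fin n))
    (hμ : IsNaturalReordering S q μ) (hν : IsNaturalReordering S (theTop n) ν) :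
    IsNaturalReordering S q (ν * μ) := by
  obtain ⟨k, ℓ, I₀, h0⟩ := hord
  obtain ⟨kμ, ℓμ, Iμ, hm⟩ := hμ
  obtain ⟨kν, ℓν, Iν, hn⟩ := hν
  obtain ⟨hval0, hpos0, hmono0, hsum0, hinj0, hne0, hop0, hidx0⟩ := h0
  obtain ⟨hvalμ, hposμ, hmonoμ, hsumμ, hinjμ, hneμ, hopμ, hidxμ⟩ := hm
  obtain ⟨hvalν, hposν, hmonoν, hsumν, hinjν, hneν, hopν, hidxν⟩ := hn
  have d0 : S.IsCycleDecomp (theTop n) ℓ I₀ := ⟨hpos0, hsum0, hinj0, hne0, hop0⟩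
  have dμ : S.IsCycleDecomp q ℓμ Iμ := ⟨hposμ, hsumμ, hinjμ, hneμ, hopμ⟩
  have dν : S.IsCycleDecomp (theTop n) ℓν Iν := ⟨hposν, hsumν, hinjν, hneν, hopν⟩
  obtain ⟨g, hgmem, hgtop⟩ := hconn (theTop n) q
  -- the conjugate decomposition of `r q`
  have hgop : ∀ x : Fin n, S.op (g x) q = g (S.op x (theTop n)) := by
    intro x
    have hc := S.conj_r hgmem (theTop n)
    rw [hgtop] at hc
    have hx := congrArg (fun e : Equiv.Perm (Fin n) => e x) hc
    simp only [Equiv.Perm.mul_apply] at hx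
    exact hx.symm
  have dD : S.IsCycleDecomp q ℓ (fun s t => g (I₀ s t)) := by
    refine ⟨hpos0, hsum0, ?_, ?_, ?_⟩
    · intro p p' hpp
      exact hinj0 (g.injective hpp)
    · intro s t h
      exact hne0 s t (g.injective (h.trans hgtop.symm))
    · intro s t
      show S.op (g (I₀ s t)) q =
        g (I₀ s ⟨(t.val + 1) % ℓ s, Nat.mod_lt _ (Nat.zero_lt_of_lt t.isLt)⟩)
      rw [hgop (I₀ s t), hop0 s t]
  obtain ⟨σμ, cμ, bijμ, hlμ, relμ⟩ := dμ.correspond dD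
  obtain ⟨σν, cν, bijν, hlν, relν⟩ := dν.correspond d0
  obtain ⟨eμ, hℓμ⟩ := sorted_eq hmonoμ hmono0 σμ bijμ hlμ
  obtain ⟨eν, hℓν⟩ := sorted_eq hmonoν hmono0 σν bijν hlν
  have hcastν : ∀ u : Fin k, Fin.cast eν (Fin.cast eν.symm u) = u := fun u => Fin.ext rfl
  have hcastμ : ∀ u : Fin k, Fin.cast eμ (Fin.cast eμ.symm u) = u := fun u => Fin.ext rfl
  -- values of `I₀` (blocks of consecutive indices)
  have hI₀val : ∀ (s : Fin k) (t : Fin (ℓ s)),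
      (I₀ s t).val = (∑ j ∈ Finset.Iio s, ℓ j) + t.val := by
    intro s t
    simpa using hidx0 s t
  -- action of μ and ν in block form
  have hμmap : ∀ (s : Fin kμ) (t : Fin (ℓμ s)),
      μ (Iμ s t) = I₀ (Fin.cast eμ s) ⟨t.val, by rw [← hℓμ s]; exact t.isLt⟩ := by
    intro s t
    apply Fin.ext
    rw [hidxμ s t, hI₀val]
    congr 1
    calc ∑ j ∈ Finset.Iio s, ℓμ j
        = ∑ j ∈ Finset.Iio s, ℓ (Fin.cast eμ j) :=
          Finset.sum_congr rfl fun j _ => hℓμ j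
      _ = ∑ j ∈ Finset.Iio (Fin.cast eμ s), ℓ j := sum_Iio_cast eμ ℓ s
  have hνmap : ∀ (a : Fin kν) (t : Fin (ℓν a)),
      ν (Iν a t) = I₀ (Fin.cast eν a) ⟨t.val, by rw [← hℓν a]; exact t.isLt⟩ := by
    intro a t
    apply Fin.ext
    rw [hidxν a t, hI₀val]
    congr 1
    calc ∑ j ∈ Finset.Iio a, ℓν j
        = ∑ j ∈ Finset.Iio a, ℓ (Fin.cast eν j) :=
          Finset.sum_congr rfl fun j _ => hℓν j
      _ = ∑ j ∈ Finset.Iio (Fin.cast eν a), ℓ j := sum_Iio_cast eν ℓ a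
  have star : ∀ (a : Fin kν) (t : Fin (ℓν a)),
      ν (I₀ (σν a) ⟨((cν a).val + t.val) % ℓ (σν a),
        Nat.mod_lt _ (Nat.zero_lt_of_lt (cν a).isLt)⟩) =
      I₀ (Fin.cast eν a) ⟨t.val, by rw [← hℓν a]; exact t.isLt⟩ := by
    intro a t
    rw [← relν a t]
    exact hνmap a t
  -- length bookkeeping
  have hℓw : ∀ u : Fin k, ℓ (σν (Fin.cast eν.symm u)) = ℓ u := by
    intro u
    rw [← hlν (Fin.cast eν.symm u), hℓν (Fin.cast eν.symm u), hcastν u]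
  have hℓs : ∀ u : Fin k,
      ℓμ (Fin.cast eμ.symm (σν (Fin.cast eν.symm u)))
        = ℓ (σν (Fin.cast eν.symm u)) := by
    intro u
    rw [hℓμ _, hcastμ _]
  have hpf : ∀ (u : Fin k) (t : Fin (ℓ u)),
      ((cν (Fin.cast eν.symm u)).val + t.val) % ℓ (σν (Fin.cast eν.symm u)) <
        ℓμ (Fin.cast eμ.symm (σν (Fin.cast eν.symm u))) := by
    intro u t
    rw [hℓs u]
    exact Nat.mod_lt _ (Nat.zero_lt_of_lt (cν _).isLt)
  -- the key computation
  have key : ∀ (u : Fin k) (t : Fin (ℓ u)),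
      (ν * μ) (Iμ (Fin.cast eμ.symm (σν (Fin.cast eν.symm u)))
        ⟨((cν (Fin.cast eν.symm u)).val + t.val) % ℓ (σν (Fin.cast eν.symm u)),
          hpf u t⟩) = I₀ u ⟨t.val, t.isLt⟩ := by
    intro u t
    have ht' : t.val < ℓν (Fin.cast eν.symm u) := by
      rw [hℓν (Fin.cast eν.symm u), hcastν u]; exact t.isLt
    show ν (μ (Iμ _ _)) = _
    rw [hμmap]
    exact (congrArg ν (I_congr I₀ (hcastμ (σν (Fin.cast eν.symm u))) rfl)).trans
      ((star (Fin.cast eν.symm u) ⟨t.val, ht'⟩).trans (I_congr I₀ (hcastν u) rfl))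
  refine ⟨k, ℓ, fun u t => Iμ (Fin.cast eμ.symm (σν (Fin.cast eν.symm u)))
      ⟨((cν (Fin.cast eν.symm u)).val + t.val) % ℓ (σν (Fin.cast eν.symm u)),
        hpf u t⟩,
    ?_, hpos0, hmono0, hsum0, ?_, ?_, ?_, ?_⟩
  · -- value at q
    have hq : μ q = theTop n := Fin.ext (by rw [hvalμ]; rfl)
    show (ν (μ q)).val = n - 1
    rw [hq]
    exact hvalν
  · -- injectivity
    intro p p' hpp
    have e := (key p.1 p.2).symm.trans ((congrArg (⇑(ν * μ)) hpp).trans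
      (key p'.1 p'.2))
    have h2 := sigma_fin_mk_eq (hinj0 (a₁ := ⟨p.1, ⟨p.2.val, p.2.isLt⟩⟩)
      (a₂ := ⟨p'.1, ⟨p'.2.val, p'.2.isLt⟩⟩) e)
    exact sigma_fin_ext h2.1 h2.2
  · -- avoids q
    intro u t
    exact hneμ _ _
  · -- cycle condition
    intro u t
    refine (hopμ _ _).trans (I_congr Iμ rfl ?_)
    show (((cν (Fin.cast eν.symm u)).val + t.val) % ℓ (σν (Fin.cast eν.symm u)) + 1)
        % ℓμ (Fin.cast eμ.symm (σν (Fin.cast eν.symm u)))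
      = ((cν (Fin.cast eν.symm u)).val + (t.val + 1) % ℓ u)
        % ℓ (σν (Fin.cast eν.symm u))
    have harith : ∀ (L c t : ℕ), ((c + t) % L + 1) % L = (c + (t + 1) % L) % L := by
      intro L c t
      rw [Nat.mod_add_mod, Nat.add_mod_mod, Nat.add_assoc]
    rw [hℓs u]
    generalize (t.val : ℕ) = tv
    generalize ((cν (Fin.cast eν.symm u)).val : ℕ) = c
    rw [hℓw u]
    exact harith _ _ _
  · -- index condition
    intro u t
    exact (congrArg Fin.val (key u t)).trans (hI₀val u ⟨t.val, t.isLt⟩)
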